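/- Let u be a standard Gaussian random vector in ℝ^d, let c ≥ 0, and let δ : ℝ^d → ℝ be a measurable function satisfying |δ(x)| ≤ c·‖x‖² for all x ∈ ℝ^d. Then the vector E[δ(u)·u] satisfies ‖E[δ(u)·u]‖ ≤ c·(d + 3)^{3/2}. -/

import Mathlib

open MeasureTheory ProbabilityTheory
open scoped RealInnerProductSpace

/-- The standard Gaussian measure on `EuclideanSpace ℝ (Fin d)`: the product of `d`
copies of the one-dimensional Gaussian `N(0,1)`. -/
noncomputable def stdGaussian (d : ℕ) : Measure (EuclideanSpace ℝ (Fin d)) :=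
  Measure.map (MeasurableEquiv.toLp 2 (Fin d → ℝ))
    (Measure.pi fun _ : Fin d => gaussianReal 0 1)


open Real Set
open scoped ENNReal NNReal

-- integrability of x^n * exp(-x^2/2) on ℝ wrt volume
lemma int_pow_exp (n : ℕ) : Integrable (fun x : ℝ => x ^ n * Real.exp (-(1/2) * x ^ 2)) := by
  have := integrable_rpow_mul_exp_neg_mul_sq (b := 1/2) (by norm_num) (s := (n : ℝ))
    (by linarith [Nat.cast_nonneg (α:=ℝ) n])
  simpa [Real.rpow_natCast] using this

-- the key Ioi integral
lemma ioi_val (n : ℕ) :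
    ∫ x in Ioi (0:ℝ), x ^ n * Real.exp (-(1/2) * x ^ 2)
      = ((1:ℝ)/2) ^ (-(((n:ℝ) + 1)) / 2) * (1/2) * Real.Gamma (((n:ℝ) + 1) / 2) := by
  have h := integral_rpow_mul_exp_neg_mul_rpow (p := 2) (q := (n:ℝ)) (b := 1/2)
    (by norm_num) (by linarith [Nat.cast_nonneg (α:=ℝ) n]) (by norm_num)
  rw [← h]
  refine setIntegral_congr_fun measurableSet_Ioi (fun x hx => ?_)
  rw [show ((2:ℝ)) = ((2:ℕ):ℝ) by norm_cast, Real.rpow_natCast, Real.rpow_natCast]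

lemma real_val (n : ℕ) (hn : Even n) :
    ∫ x : ℝ, x ^ n * Real.exp (-(1/2) * x ^ 2)
      = 2 * (((1:ℝ)/2) ^ (-(((n:ℝ) + 1)) / 2) * (1/2) * Real.Gamma (((n:ℝ) + 1) / 2)) := by
  rw [← ioi_val n, ← integral_comp_abs (f := fun x => x ^ n * Real.exp (-(1/2) * x ^ 2))]
  congr 1 with x
  simp [hn.pow_abs, sq_abs]

-- moments of gaussianReal 0 1
lemma gauss_int (g : ℝ → ℝ) :
    ∫ x, g x ∂(gaussianReal 0 1)
      = ∫ x, gaussianPDFReal 0 1 x * g x := by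
  rw [gaussianReal_of_var_ne_zero 0 one_ne_zero]
  have : (gaussianPDF 0 1) = fun x => ((gaussianPDFReal 0 1 x).toNNReal : ℝ≥0∞) := rfl
  rw [this, integral_withDensity_eq_integral_smul
    ((measurable_gaussianPDFReal 0 1).real_toNNReal) g]
  congr 1 with x
  simp [NNReal.smul_def, Real.coe_toNNReal _ (gaussianPDFReal_nonneg 0 1 x)]

lemma pdf_eq (x : ℝ) : gaussianPDFReal 0 1 x
    = (Real.sqrt (2*π))⁻¹ * Real.exp (-(1/2) * x^2) := by
  simp only [gaussianPDFReal, NNReal.coe_one, mul_one, sub_zero]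
  congr 1
  ring

lemma gauss_integrable (n : ℕ) : Integrable (fun x : ℝ => x ^ n) (gaussianReal 0 1) := by
  rw [gaussianReal_of_var_ne_zero 0 one_ne_zero,
    show gaussianPDF 0 1 = fun x => ((gaussianPDFReal 0 1 x).toNNReal : ℝ≥0∞) from rfl,
    integrable_withDensity_iff_integrable_smul ((measurable_gaussianPDFReal 0 1).real_toNNReal)]
  have : (fun x : ℝ => ((gaussianPDFReal 0 1 x).toNNReal : ℝ≥0) • x ^ n)
      = fun x : ℝ => (Real.sqrt (2*π))⁻¹ * (x ^ n * Real.exp (-(1/2) * x^2)) := by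
    funext x
    rw [NNReal.smul_def, smul_eq_mul, Real.coe_toNNReal _ (gaussianPDFReal_nonneg 0 1 x),
      pdf_eq x]
    ring
  rw [this]
  exact (int_pow_exp n).const_mul _

lemma gauss_moment (n : ℕ) (hn : Even n) :
    ∫ x, x ^ n ∂(gaussianReal 0 1)
      = (Real.sqrt (2*π))⁻¹ *
        (2 * (((1:ℝ)/2) ^ (-(((n:ℝ) + 1)) / 2) * (1/2) * Real.Gamma (((n:ℝ) + 1) / 2))) := by
  rw [gauss_int (fun x => x ^ n), ← real_val n hn, ← integral_const_mul]
  congr 1 with x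
  rw [pdf_eq x]
  ring

lemma sqrt2_rpow (r : ℝ) : ((1:ℝ)/2) ^ (-r/2) = (2:ℝ) ^ (r/2) := by
  rw [one_div, Real.inv_rpow (by norm_num), ← Real.rpow_neg (by norm_num), neg_div, neg_neg]

lemma rpow_half_two : (2:ℝ) ^ ((2:ℝ)/2) = 2 := by norm_num

lemma gauss_m2 : ∫ x, x ^ 2 ∂(gaussianReal 0 1) = 1 := by
  rw [gauss_moment 2 (by norm_num)]
  have h1 : ((2:ℕ):ℝ) + 1 = 3 := by norm_num
  rw [h1, sqrt2_rpow 3]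
  have hg : Real.Gamma ((3:ℝ)/2) = (1/2) * Real.sqrt π := by
    rw [show (3:ℝ)/2 = 1/2 + 1 by norm_num, Real.Gamma_add_one (by norm_num),
      Real.Gamma_one_half_eq]
  have h2 : (2:ℝ) ^ ((3:ℝ)/2) = 2 * Real.sqrt 2 := by
    rw [show (3:ℝ)/2 = 1 + 1/2 by norm_num, Real.rpow_add (by norm_num), Real.rpow_one,
      ← Real.sqrt_eq_rpow]
  rw [hg, h2, Real.sqrt_mul (by norm_num) π]
  have s2 : Real.sqrt 2 * Real.sqrt 2 = 2 := Real.mul_self_sqrt (by norm_num)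
  have sp : Real.sqrt π * Real.sqrt π = π := Real.mul_self_sqrt Real.pi_pos.le
  have h2p : (0:ℝ) < Real.sqrt 2 := Real.sqrt_pos.2 (by norm_num)
  have hpp : (0:ℝ) < Real.sqrt π := Real.sqrt_pos.2 Real.pi_pos
  field_simp

lemma gauss_m4 : ∫ x, x ^ 4 ∂(gaussianReal 0 1) = 3 := by
  rw [gauss_moment 4 ⟨2, rfl⟩]
  have h1 : ((4:ℕ):ℝ) + 1 = 5 := by norm_num
  rw [h1, sqrt2_rpow 5]
  have hg : Real.Gamma ((5:ℝ)/2) = (3/2) * ((1/2) * Real.sqrt π) := by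
    rw [show (5:ℝ)/2 = 3/2 + 1 by norm_num, Real.Gamma_add_one (by norm_num),
      show (3:ℝ)/2 = 1/2 + 1 by norm_num, Real.Gamma_add_one (by norm_num),
      Real.Gamma_one_half_eq]
  have h2 : (2:ℝ) ^ ((5:ℝ)/2) = 4 * Real.sqrt 2 := by
    have h4 : (2:ℝ) ^ (2:ℝ) = 4 := by
      rw [show (2:ℝ) = ((2:ℕ):ℝ) by norm_cast, Real.rpow_natCast]
      norm_num
    rw [show (5:ℝ)/2 = 2 + 1/2 by norm_num, Real.rpow_add (by norm_num),
      ← Real.sqrt_eq_rpow, h4]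
  rw [hg, h2, Real.sqrt_mul (by norm_num) π]
  have s2 : Real.sqrt 2 * Real.sqrt 2 = 2 := Real.mul_self_sqrt (by norm_num)
  have sp : Real.sqrt π * Real.sqrt π = π := Real.mul_self_sqrt Real.pi_pos.le
  have h2p : (0:ℝ) < Real.sqrt 2 := Real.sqrt_pos.2 (by norm_num)
  have hpp : (0:ℝ) < Real.sqrt π := Real.sqrt_pos.2 Real.pi_pos
  field_simp
  nlinarith [s2, sp]

section pi
open Finset

variable {d : ℕ}

noncomputable def gmeas : MeasureSpace ℝ := ⟨gaussianReal 0 1⟩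

attribute [local instance] gmeas

instance : SigmaFinite (volume : Measure ℝ) := by
  show SigmaFinite (gaussianReal 0 1); infer_instance

instance : IsProbabilityMeasure (volume : Measure ℝ) := by
  show IsProbabilityMeasure (gaussianReal 0 1); infer_instance

noncomputable abbrev piG (d : ℕ) : Measure (Fin d → ℝ) :=
  Measure.pi fun _ : Fin d => gaussianReal 0 1

/-- the per-coordinate factor -/
noncomputable def hfac (i j k : Fin d) (x : ℝ) : ℝ :=
  (if k = i then x ^ 2 else 1) * (if k = j then x ^ 2 else 1)

lemma hfac_integrable (i j k : Fin d) : Integrable (hfac i j k) (gaussianReal 0 1) := by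
  unfold hfac
  by_cases hi : k = i <;> by_cases hj : k = j
  · simp only [if_pos hi, if_pos hj]
    simpa [← pow_add] using gauss_integrable 4
  · simp only [if_pos hi, if_neg hj, mul_one]
    exact gauss_integrable 2
  · simp only [if_neg hi, if_pos hj, one_mul]
    exact gauss_integrable 2
  · simp only [if_neg hi, if_neg hj, mul_one]
    exact integrable_const (1:ℝ)

lemma hfac_integral (i j k : Fin d) :
    ∫ x, hfac i j k x ∂(gaussianReal 0 1) = if k = i ∧ k = j then 3 else 1 := by
  unfold hfac
  by_cases hi : k = i <;> by_cases hj : k = j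
  · rw [if_pos ⟨hi, hj⟩]
    simp only [if_pos hi, if_pos hj]
    calc ∫ x, x ^ 2 * x ^ 2 ∂(gaussianReal 0 1) = ∫ x, x ^ 4 ∂(gaussianReal 0 1) := by
          congr 1 with x; ring
      _ = 3 := gauss_m4
  · rw [if_neg (by tauto)]
    simp only [if_pos hi, if_neg hj, mul_one]
    exact gauss_m2
  · rw [if_neg (by tauto)]
    simp only [if_neg hi, if_pos hj, one_mul]
    exact gauss_m2
  · rw [if_neg (by tauto)]
    simp only [if_neg hi, if_neg hj, mul_one]
    simp

lemma prod_hfac (i j : Fin d) (y : Fin d → ℝ) :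
    ∏ k, hfac i j k (y k) = y i ^ 2 * y j ^ 2 := by
  unfold hfac
  rw [Finset.prod_mul_distrib, Finset.prod_ite_eq' Finset.univ i (fun k => y k ^ 2),
    Finset.prod_ite_eq' Finset.univ j (fun k => y k ^ 2)]
  simp

lemma hprod_integrable (i j : Fin d) :
    Integrable (fun y : Fin d → ℝ => y i ^ 2 * y j ^ 2) (piG d) := by
  have h := MeasureTheory.Integrable.fintype_prod (𝕜 := ℝ) (f := hfac i j)
    (fun k => hfac_integrable i j k)
  have : (fun y : Fin d → ℝ => ∏ k, hfac i j k (y k))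
      = fun y : Fin d → ℝ => y i ^ 2 * y j ^ 2 := funext (prod_hfac i j)
  rwa [this] at h

lemma hprod_integral (i j : Fin d) :
    ∫ y, y i ^ 2 * y j ^ 2 ∂(piG d) = if i = j then 3 else 1 := by
  have h : ∫ y : Fin d → ℝ, ∏ k, hfac i j k (y k) = ∏ k, ∫ x, hfac i j k x :=
    MeasureTheory.integral_fintype_prod_eq_prod (𝕜 := ℝ) (ι := Fin d) (fun k => hfac i j k)
      (μ := fun _ => gaussianReal 0 1)
  have he : (fun y : Fin d → ℝ => ∏ k, hfac i j k (y k))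
      = fun y : Fin d → ℝ => y i ^ 2 * y j ^ 2 := funext (prod_hfac i j)
  rw [he] at h
  rw [show (∫ y, y i ^ 2 * y j ^ 2 ∂(piG d)) = ∫ y : Fin d → ℝ, y i ^ 2 * y j ^ 2 from rfl, h]
  simp_rw [show ∀ k : Fin d, (∫ x, hfac i j k x) = if k = i ∧ k = j then 3 else 1 from
    fun k => hfac_integral i j k]
  by_cases hij : i = j
  · subst hij
    simp only [and_self, if_pos rfl]
    rw [Finset.prod_ite_eq' Finset.univ i (fun _ => (3:ℝ))]
    simp
  · rw [if_neg hij]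
    apply Finset.prod_eq_one
    intro k _
    rw [if_neg]
    rintro ⟨rfl, rfl⟩
    exact hij rfl

lemma coord_sq_integrable (i : Fin d) :
    Integrable (fun y : Fin d → ℝ => y i ^ 2) (piG d) := by
  have h := MeasureTheory.Integrable.fintype_prod (𝕜 := ℝ)
    (f := fun k x => if k = i then x ^ 2 else 1)
    (fun k => by
      by_cases hk : k = i
      · simp only [if_pos hk]; exact gauss_integrable 2
      · simp only [if_neg hk]
        exact integrable_const (1:ℝ))
  have he : (fun y : Fin d → ℝ => ∏ k, if k = i then y k ^ 2 else 1)
      = fun y : Fin d → ℝ => y i ^ 2 := by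
    funext y
    rw [Finset.prod_ite_eq' Finset.univ i (fun k => y k ^ 2)]
    simp
  rwa [he] at h

lemma coord_sq_integral (i : Fin d) : ∫ y, y i ^ 2 ∂(piG d) = 1 := by
  have h : ∫ y : Fin d → ℝ, (∏ k, if k = i then y k ^ 2 else (1:ℝ))
      = ∏ k, ∫ x : ℝ, if k = i then x ^ 2 else (1:ℝ) :=
    MeasureTheory.integral_fintype_prod_eq_prod (𝕜 := ℝ) (ι := Fin d)
      (fun k x => if k = i then x ^ 2 else (1:ℝ)) (μ := fun _ => gaussianReal 0 1)
  have he : (fun y : Fin d → ℝ => ∏ k, if k = i then y k ^ 2 else 1)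
      = fun y : Fin d → ℝ => y i ^ 2 := by
    funext y
    rw [Finset.prod_ite_eq' Finset.univ i (fun k => y k ^ 2)]
    simp
  rw [show (∫ y, y i ^ 2 ∂(piG d)) = ∫ y : Fin d → ℝ, y i ^ 2 from rfl, ← he, h]
  apply Finset.prod_eq_one
  intro k _
  by_cases hk : k = i
  · simp only [if_pos hk]
    exact gauss_m2
  · simp only [if_neg hk]
    simp

lemma piG_sum_integrable :
    Integrable (fun y : Fin d → ℝ => ∑ i, y i ^ 2) (piG d) :=
  integrable_finset_sum _ (fun i _ => coord_sq_integrable i)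

lemma piG_sum_sq_eq (y : Fin d → ℝ) :
    (∑ i, y i ^ 2) ^ 2 = ∑ i, ∑ j, y i ^ 2 * y j ^ 2 := by
  rw [sq, Finset.sum_mul_sum]

lemma piG_sum_sq_integrable :
    Integrable (fun y : Fin d → ℝ => (∑ i, y i ^ 2) ^ 2) (piG d) := by
  have : (fun y : Fin d → ℝ => (∑ i, y i ^ 2) ^ 2)
      = fun y : Fin d → ℝ => ∑ i, ∑ j, y i ^ 2 * y j ^ 2 := funext piG_sum_sq_eq
  rw [this]
  exact integrable_finset_sum _ (fun i _ =>
    integrable_finset_sum _ (fun j _ => hprod_integrable i j))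

lemma piG_moment2 : ∫ y, (∑ i, y i ^ 2) ∂(piG d) = d := by
  rw [integral_finset_sum _ (fun i _ => coord_sq_integrable i)]
  simp [coord_sq_integral]

lemma piG_moment4 : ∫ y, (∑ i, y i ^ 2) ^ 2 ∂(piG d) = (d : ℝ) ^ 2 + 2 * d := by
  simp_rw [piG_sum_sq_eq]
  rw [integral_finset_sum _ (fun i _ =>
    integrable_finset_sum _ (fun j _ => hprod_integrable i j))]
  have : ∀ i : Fin d, (∫ y, ∑ j : Fin d, y i ^ 2 * y j ^ 2 ∂(piG d)) = (d : ℝ) + 2 := by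
    intro i
    rw [integral_finset_sum _ (fun j _ => hprod_integrable i j)]
    simp_rw [hprod_integral]
    have : ∀ j : Fin d, (if i = j then (3:ℝ) else 1) = 1 + (if j = i then 2 else 0) := by
      intro j
      by_cases h : i = j
      · rw [if_pos h, if_pos h.symm]; norm_num
      · rw [if_neg h, if_neg (fun hh => h hh.symm)]; norm_num
    simp_rw [this]
    rw [Finset.sum_add_distrib, Finset.sum_ite_eq' Finset.univ i (fun _ => (2:ℝ))]
    simp
  rw [Finset.sum_congr rfl (fun i _ => this i), Finset.sum_const, Finset.card_univ,
    Fintype.card_fin, nsmul_eq_mul]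
  ring

end pi

section SG
variable {d : ℕ}

lemma norm_symm (y : Fin d → ℝ) :
    ‖(MeasurableEquiv.toLp 2 (Fin d → ℝ)) y‖ ^ 2 = ∑ i, y i ^ 2 := by
  rw [EuclideanSpace.norm_eq, Real.sq_sqrt (by positivity)]
  congr 1 with i
  rw [Real.norm_eq_abs, sq_abs]
  rfl

lemma SG_integral_eq (g : EuclideanSpace ℝ (Fin d) → ℝ) :
    ∫ x, g x ∂(stdGaussian d)
      = ∫ y, g ((MeasurableEquiv.toLp 2 (Fin d → ℝ)) y)
          ∂(Measure.pi fun _ : Fin d => gaussianReal 0 1) := by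
  exact MeasureTheory.integral_map_equiv (MeasurableEquiv.toLp 2 (Fin d → ℝ)) g

lemma SG_integrable_iff (g : EuclideanSpace ℝ (Fin d) → ℝ) :
    Integrable g (stdGaussian d)
      ↔ Integrable (fun y => g ((MeasurableEquiv.toLp 2 (Fin d → ℝ)) y))
          (Measure.pi fun _ : Fin d => gaussianReal 0 1) :=
  MeasureTheory.integrable_map_equiv (MeasurableEquiv.toLp 2 (Fin d → ℝ)) g

lemma SG_int2 : Integrable (fun x : EuclideanSpace ℝ (Fin d) => ‖x‖ ^ 2) (stdGaussian d) := by
  rw [SG_integrable_iff]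
  have : (fun y : Fin d → ℝ => ‖(MeasurableEquiv.toLp 2 (Fin d → ℝ)) y‖ ^ 2)
      = fun y : Fin d → ℝ => ∑ i, y i ^ 2 := funext norm_symm
  rw [this]
  exact piG_sum_integrable

lemma SG_int4 : Integrable (fun x : EuclideanSpace ℝ (Fin d) => ‖x‖ ^ 4) (stdGaussian d) := by
  rw [SG_integrable_iff]
  have : (fun y : Fin d → ℝ => ‖(MeasurableEquiv.toLp 2 (Fin d → ℝ)) y‖ ^ 4)
      = fun y : Fin d → ℝ => (∑ i, y i ^ 2) ^ 2 := by
    funext y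
    rw [show (4 : ℕ) = 2 * 2 from rfl, pow_mul, norm_symm]
  rw [this]
  exact piG_sum_sq_integrable

lemma SG_m2 : ∫ x, ‖x‖ ^ 2 ∂(stdGaussian d) = d := by
  rw [SG_integral_eq]
  simp_rw [norm_symm]
  exact piG_moment2

lemma SG_m4 : ∫ x, ‖x‖ ^ 4 ∂(stdGaussian d) = (d : ℝ) ^ 2 + 2 * d := by
  rw [SG_integral_eq]
  simp_rw [show ∀ y : Fin d → ℝ, ‖(MeasurableEquiv.toLp 2 (Fin d → ℝ)) y‖ ^ 4
      = (∑ i, y i ^ 2) ^ 2 from fun y => by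
    rw [show (4 : ℕ) = 2 * 2 from rfl, pow_mul, norm_symm]]
  exact piG_moment4

lemma SG_int3 : Integrable (fun x : EuclideanSpace ℝ (Fin d) => ‖x‖ ^ 3) (stdGaussian d) := by
  refine Integrable.mono' (SG_int2.add SG_int4)
    ((continuous_norm.pow 3).aestronglyMeasurable) (Filter.Eventually.of_forall fun x => ?_)
  have h : (0:ℝ) ≤ ‖x‖ := norm_nonneg x
  rw [Real.norm_eq_abs, abs_of_nonneg (by positivity)]
  simp only [Pi.add_apply]
  nlinarith [mul_nonneg (sq_nonneg ‖x‖) (sq_nonneg (‖x‖ - 1/2)), sq_nonneg ‖x‖]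

lemma SG_m3 : ∫ x, ‖x‖ ^ 3 ∂(stdGaussian d) ≤ (d : ℝ) * Real.sqrt ((d : ℝ) + 2) := by
  set s : ℝ := Real.sqrt ((d : ℝ) + 2) with hs
  have hs0 : 0 < s := Real.sqrt_pos.2 (by positivity)
  have hss : s * s = (d : ℝ) + 2 := Real.mul_self_sqrt (by positivity)
  have hpt : ∀ x : EuclideanSpace ℝ (Fin d),
      ‖x‖ ^ 3 ≤ (s / 2) * ‖x‖ ^ 2 + (1 / (2 * s)) * ‖x‖ ^ 4 := by
    intro x
    have h : (0:ℝ) ≤ ‖x‖ := norm_nonneg x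
    have key : 0 ≤ (‖x‖ ^ 2 - s * ‖x‖) ^ 2 / s := by positivity
    have expand : (s / 2) * ‖x‖ ^ 2 + (1 / (2 * s)) * ‖x‖ ^ 4 - ‖x‖ ^ 3
        = (‖x‖ ^ 2 - s * ‖x‖) ^ 2 / (2 * s) := by
      field_simp
      ring
    nlinarith [div_nonneg (sq_nonneg (‖x‖ ^ 2 - s * ‖x‖)) (by positivity : (0:ℝ) ≤ 2 * s)]
  have hint : Integrable (fun x : EuclideanSpace ℝ (Fin d) =>
      (s / 2) * ‖x‖ ^ 2 + (1 / (2 * s)) * ‖x‖ ^ 4) (stdGaussian d) :=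
    (SG_int2.const_mul _).add (SG_int4.const_mul _)
  calc ∫ x, ‖x‖ ^ 3 ∂(stdGaussian d)
      ≤ ∫ x, ((s / 2) * ‖x‖ ^ 2 + (1 / (2 * s)) * ‖x‖ ^ 4) ∂(stdGaussian d) :=
        integral_mono SG_int3 hint hpt
    _ = (s / 2) * ((d:ℝ)) + (1 / (2 * s)) * ((d:ℝ) ^ 2 + 2 * d) := by
        rw [integral_add (SG_int2.const_mul _) (SG_int4.const_mul _),
          integral_const_mul, integral_const_mul, SG_m2, SG_m4]
    _ = (d : ℝ) * s := by
        have : (d:ℝ) ^ 2 + 2 * d = d * (s * s) := by rw [hss]; ring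
        rw [this]
        field_simp
        ring
end SG

lemma arith_bound (d : ℕ) :
    (d : ℝ) * Real.sqrt ((d : ℝ) + 2) ≤ ((d : ℝ) + 3) ^ ((3 : ℝ) / 2) := by
  have h : ((d:ℝ)+3) ^ ((3:ℝ)/2) = ((d:ℝ)+3) * Real.sqrt ((d:ℝ)+3) := by
    rw [show (3:ℝ)/2 = 1 + 1/2 by norm_num, Real.rpow_add (by positivity), Real.rpow_one,
      ← Real.sqrt_eq_rpow]
  rw [h]
  exact mul_le_mul (by linarith)
    (Real.sqrt_le_sqrt (by linarith)) (Real.sqrt_nonneg _) (by positivity)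

/-- Let `u` be a standard Gaussian random vector in `ℝ^d`, let `c ≥ 0`, and let `δ : ℝ^d → ℝ`
be measurable with `|δ(x)| ≤ c‖x‖²` for all `x`. Then `‖E[δ(u)·u]‖ ≤ c·(d + 3)^{3/2}`. -/
theorem stmt13 {d : ℕ} (hd : 0 < d)
    {Ω : Type*} [MeasureSpace Ω] [IsProbabilityMeasure (ℙ : Measure Ω)]
    (u : Ω → EuclideanSpace ℝ (Fin d)) (hu : Measurable u)
    (hlaw : Measure.map u ℙ = stdGaussian d)
    (c : ℝ) (hc : 0 ≤ c)
    (δ : EuclideanSpace ℝ (Fin d) → ℝ) (hδmeas : Measurable δ)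
    (hδ : ∀ x, |δ x| ≤ c * ‖x‖ ^ 2) :
    ‖∫ ω, δ (u ω) • u ω ∂ℙ‖ ≤ c * ((d : ℝ) + 3) ^ ((3 : ℝ) / 2) := by
  have hae : AEMeasurable u ℙ := hu.aemeasurable
  have hmeas3 : AEStronglyMeasurable (fun x : EuclideanSpace ℝ (Fin d) => ‖x‖ ^ 3)
      (Measure.map u ℙ) := (continuous_norm.pow 3).aestronglyMeasurable
  have hint3Ω : Integrable (fun ω => ‖u ω‖ ^ 3) ℙ := by
    have h := (integrable_map_measure hmeas3 hae).mp (by rw [hlaw]; exact SG_int3)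
    exact h
  have hbound : ∀ ω, ‖δ (u ω) • u ω‖ ≤ c * ‖u ω‖ ^ 3 := by
    intro ω
    rw [norm_smul, Real.norm_eq_abs]
    calc |δ (u ω)| * ‖u ω‖ ≤ (c * ‖u ω‖ ^ 2) * ‖u ω‖ :=
          mul_le_mul_of_nonneg_right (hδ _) (norm_nonneg _)
      _ = c * ‖u ω‖ ^ 3 := by ring
  have hI : Integrable (fun ω => δ (u ω) • u ω) ℙ := by
    refine Integrable.mono' (hint3Ω.const_mul c)
      ((hδmeas.comp hu).smul hu).aestronglyMeasurable
      (Filter.Eventually.of_forall hbound)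
  calc ‖∫ ω, δ (u ω) • u ω ∂ℙ‖
      ≤ ∫ ω, ‖δ (u ω) • u ω‖ ∂ℙ := norm_integral_le_integral_norm _
    _ ≤ ∫ ω, c * ‖u ω‖ ^ 3 ∂ℙ :=
        integral_mono hI.norm (hint3Ω.const_mul c) hbound
    _ = c * ∫ ω, ‖u ω‖ ^ 3 ∂ℙ := integral_const_mul c _
    _ = c * ∫ x, ‖x‖ ^ 3 ∂(stdGaussian d) := by
        rw [← hlaw, integral_map hae hmeas3]
    _ ≤ c * ((d : ℝ) * Real.sqrt ((d : ℝ) + 2)) := mul_le_mul_of_nonneg_left SG_m3 hc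
    _ ≤ c * ((d : ℝ) + 3) ^ ((3 : ℝ) / 2) := mul_le_mul_of_nonneg_left (arith_bound d) hc
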